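/- Let 𝕂 be the field of generalised Puiseux series in two variables t, u with real coefficients, i.e. the Hahn series field over ℝ with value group ℝ² ordered lexicographically (formal series ∑_α c_α t^{α₁} u^{α₂} with well-ordered support in Lex ℝ²), ordered so that a nonzero series is positive iff its leading coefficient is positive, and let val₂ : 𝕂 → T₂ ∪ {∞} send a nonzero series to the lexicographic minimum of its support and 0 to ∞, applied to 𝕂^d coordinatewise. If K ⊆ 𝕂_{≥0}^d is an ordinary cone, then val₂(K) is a rank two tropical cone in (T₂ ∪ {∞})^d, and conversely every rank two tropical cone arises as val₂(K) for some ordinary cone K ⊆ 𝕂_{≥0}^d. Furthermore, if K is polyhedral then val₂(K) is a polyhedral rank two tropical cone, and conversely every polyhedral rank two tropical cone is the image under val₂ of a polyhedral cone. -/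

import Mathlib

noncomputable section
open scoped Classical

/-- The value group `ℝ²` with the lexicographic ordering. -/
abbrev Gamma2 := Lex (ℝ × ℝ)

/-- The field `𝕂` of generalised Puiseux series in two variables: Hahn series over `ℝ`
with value group `Lex ℝ²`. -/
abbrev K2 := HahnSeries Gamma2 ℝ

/-- A nonzero series is positive iff its leading coefficient is positive. -/
def posK (x : K2) : Prop := x ≠ 0 ∧ 0 < x.coeff x.order

/-- Nonnegative elements of `𝕂`. -/
def nnegK (x : K2) : Prop := x = 0 ∨ posK x

/-- The rank two valuation: the lexicographic minimum of the support, and `∞` on `0`. -/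
def val2K (x : K2) : WithTop Gamma2 := if x = 0 then ⊤ else ↑x.order

/-- Coordinatewise rank two valuation on `𝕂^d`. -/
def val2vec {d : ℕ} (x : Fin d → K2) : Fin d → WithTop Gamma2 := fun i => val2K (x i)

/-- An ordinary cone in `𝕂^d`. -/
def IsConeK {d : ℕ} (K : Set (Fin d → K2)) : Prop :=
  K.Nonempty ∧ ∀ p ∈ K, ∀ q ∈ K, ∀ l m : K2, nnegK l → nnegK m → l • p + m • q ∈ K

/-- A polyhedral (finitely generated) cone in `𝕂^d`. -/
def IsPolyConeK {d : ℕ} (K : Set (Fin d → K2)) : Prop :=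
  ∃ (n : ℕ) (v : Fin n → Fin d → K2),
    K = {x | ∃ l : Fin n → K2, (∀ j, nnegK (l j)) ∧ x = ∑ j, l j • v j}

/-- The tropical combination `min(λ+p, μ+q)` in `(T₂ ∪ {∞})^d`. -/
def tropComb2 {d : ℕ} (l m : WithTop Gamma2) (p q : Fin d → WithTop Gamma2) :
    Fin d → WithTop Gamma2 :=
  fun i => min (l + p i) (m + q i)

/-- A rank two tropical cone in `(T₂ ∪ {∞})^d`. -/
def IsTropCone2 {d : ℕ} (M : Set (Fin d → WithTop Gamma2)) : Prop :=
  M.Nonempty ∧ ∀ p ∈ M, ∀ q ∈ M, ∀ l m : WithTop Gamma2, tropComb2 l m p q ∈ M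

/-- A polyhedral (finitely generated) rank two tropical cone. -/
def IsPolyTropCone2 {d : ℕ} (M : Set (Fin d → WithTop Gamma2)) : Prop :=
  ∃ (n : ℕ) (v : Fin n → Fin d → WithTop Gamma2),
    M = {x | ∃ lam : Fin n → WithTop Gamma2,
      x = fun i => Finset.univ.inf fun j => lam j + v j i}

lemma val2K_zero : val2K 0 = ⊤ := if_pos rfl
lemma val2K_of_ne {x : K2} (hx : x ≠ 0) : val2K x = ↑x.order := if_neg hx

lemma nnegK_one : nnegK 1 := Or.inr ⟨one_ne_zero, by
  rw [HahnSeries.order_one]; simp [HahnSeries.coeff_one]⟩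

lemma order_eq_of {z : K2} {a : Gamma2} (h1 : z.coeff a ≠ 0)
    (h2 : ∀ c < a, z.coeff c = 0) : z.order = a := by
  have hz : z ≠ 0 := fun h => h1 (by simp [h])
  refine le_antisymm (HahnSeries.order_le_of_coeff_ne_zero h1) ?_
  by_contra h
  push_neg at h
  exact (by rw [← HahnSeries.leadingCoeff_eq]; exact HahnSeries.leadingCoeff_ne_zero.mpr hz : z.coeff z.order ≠ 0) (h2 _ h)

lemma posK_add_of_le {x y : K2} (hx : posK x) (hy : posK y) (h : x.order ≤ y.order) :
    posK (x + y) ∧ (x + y).order = x.order := by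
  have hyco : 0 ≤ y.coeff x.order := by
    rcases lt_or_eq_of_le h with h' | h'
    · rw [HahnSeries.coeff_eq_zero_of_lt_order h']
    · rw [h']; exact le_of_lt hy.2
  have hpos : 0 < (x + y).coeff x.order := by
    rw [HahnSeries.coeff_add]; exact add_pos_of_pos_of_nonneg hx.2 hyco
  have h2 : ∀ c < x.order, (x + y).coeff c = 0 := fun c hc => by
    rw [HahnSeries.coeff_add, HahnSeries.coeff_eq_zero_of_lt_order hc,
      HahnSeries.coeff_eq_zero_of_lt_order (lt_of_lt_of_le hc h), add_zero]
  have ho := order_eq_of (ne_of_gt hpos) h2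
  exact ⟨⟨fun hz => by simp [hz] at hpos, by rw [ho]; exact hpos⟩, ho⟩

lemma nneg_add {x y : K2} (hx : nnegK x) (hy : nnegK y) :
    nnegK (x + y) ∧ val2K (x + y) = min (val2K x) (val2K y) := by
  rcases hx with rfl | hx
  · refine ⟨by simpa using hy, by simp [val2K_zero]⟩
  rcases hy with rfl | hy
  · refine ⟨by rw [add_zero]; exact Or.inr hx, by simp [val2K_zero]⟩
  rcases le_total x.order y.order with h | h
  · obtain ⟨hp, ho⟩ := posK_add_of_le hx hy h
    refine ⟨Or.inr hp, ?_⟩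
    rw [val2K_of_ne hp.1, val2K_of_ne hx.1, val2K_of_ne hy.1, ho]
    exact (min_eq_left (WithTop.coe_le_coe.mpr h)).symm
  · obtain ⟨hp, ho⟩ := posK_add_of_le hy hx h
    rw [add_comm] at hp ho
    refine ⟨Or.inr hp, ?_⟩
    rw [val2K_of_ne hp.1, val2K_of_ne hx.1, val2K_of_ne hy.1, ho]
    exact (min_eq_right (WithTop.coe_le_coe.mpr h)).symm

lemma nneg_mul {x y : K2} (hx : nnegK x) (hy : nnegK y) :
    nnegK (x * y) ∧ val2K (x * y) = val2K x + val2K y := by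
  rcases hx with rfl | hx
  · exact ⟨Or.inl (zero_mul y), by simp [val2K_zero]⟩
  rcases hy with rfl | hy
  · exact ⟨Or.inl (mul_zero x), by simp [val2K_zero]⟩
  have hxy : x * y ≠ 0 := mul_ne_zero hx.1 hy.1
  have hord : (x * y).order = x.order + y.order := HahnSeries.order_mul hx.1 hy.1
  have hc : (x * y).coeff ((x * y).order) = x.coeff x.order * y.coeff y.order := by
    rw [hord, HahnSeries.coeff_mul_order_add_order, ← HahnSeries.leadingCoeff_eq,
      ← HahnSeries.leadingCoeff_eq]
  refine ⟨Or.inr ⟨hxy, by rw [hc]; exact mul_pos hx.2 hy.2⟩, ?_⟩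
  rw [val2K_of_ne hxy, val2K_of_ne hx.1, val2K_of_ne hy.1, hord, WithTop.coe_add]

def lift2 (l : WithTop Gamma2) : K2 := l.recTopCoe 0 (fun a => HahnSeries.single a 1)

lemma nneg_lift (l : WithTop Gamma2) : nnegK (lift2 l) ∧ val2K (lift2 l) = l := by
  cases l with
  | top => exact ⟨Or.inl rfl, val2K_zero⟩
  | coe a =>
    have h1 : (HahnSeries.single a (1 : ℝ)) ≠ 0 := HahnSeries.single_ne_zero one_ne_zero
    refine ⟨Or.inr ⟨h1, ?_⟩, ?_⟩
    · show 0 < (HahnSeries.single a (1:ℝ)).coeff (HahnSeries.single a (1:ℝ)).order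
      rw [HahnSeries.order_single one_ne_zero, HahnSeries.coeff_single_same]; norm_num
    · rw [show lift2 (↑a) = HahnSeries.single a 1 from rfl, val2K_of_ne h1,
        HahnSeries.order_single one_ne_zero]

lemma nneg_sum {ι : Type*} (s : Finset ι) (f : ι → K2) (h : ∀ j ∈ s, nnegK (f j)) :
    nnegK (∑ j ∈ s, f j) ∧ val2K (∑ j ∈ s, f j) = s.inf (fun j => val2K (f j)) := by
  induction s using Finset.cons_induction with
  | empty => exact ⟨Or.inl (by simp), by simp [val2K_zero]⟩
  | cons a s ha ih =>
    obtain ⟨h1, h2⟩ := ih (fun j hj => h j (Finset.mem_cons_of_mem hj))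
    obtain ⟨h3, h4⟩ := nneg_add (h a (Finset.mem_cons_self a s)) h1
    rw [Finset.sum_cons, Finset.inf_cons]
    exact ⟨h3, by rw [h4, h2]⟩

/-- If `K ⊆ 𝕂_{≥0}^d` is an ordinary cone then `val₂(K)` is a rank
two tropical cone, and conversely every rank two tropical cone arises this way;
moreover polyhedral cones tropicalise to polyhedral rank two tropical cones, and
every polyhedral rank two tropical cone is the image of a polyhedral cone. -/
lemma key_sum {d n : ℕ} (v : Fin n → Fin d → K2) (hvn : ∀ j i, nnegK (v j i))
    (l : Fin n → K2) (hl : ∀ j, nnegK (l j)) (i : Fin d) :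
    nnegK ((∑ j, l j • v j) i) ∧
    val2K ((∑ j, l j • v j) i) = Finset.univ.inf fun j => val2K (l j) + val2K (v j i) := by
  have hs : (∑ j, l j • v j) i = ∑ j, l j * v j i := by simp [Finset.sum_apply]
  obtain ⟨h1, h2⟩ := nneg_sum Finset.univ (fun j => l j * v j i)
    (fun j _ => (nneg_mul (hl j) (hvn j i)).1)
  rw [hs]
  exact ⟨h1, h2.trans (Finset.inf_congr rfl fun j _ => (nneg_mul (hl j) (hvn j i)).2)⟩

theorem tropicalisation_of_cones (d : ℕ) :
    (∀ K : Set (Fin d → K2), (∀ x ∈ K, ∀ i, nnegK (x i)) → IsConeK K →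
      IsTropCone2 (val2vec '' K)) ∧
    (∀ M : Set (Fin d → WithTop Gamma2), IsTropCone2 M →
      ∃ K : Set (Fin d → K2), (∀ x ∈ K, ∀ i, nnegK (x i)) ∧ IsConeK K ∧
        val2vec '' K = M) ∧
    (∀ K : Set (Fin d → K2), (∀ x ∈ K, ∀ i, nnegK (x i)) → IsPolyConeK K →
      IsPolyTropCone2 (val2vec '' K)) ∧
    (∀ M : Set (Fin d → WithTop Gamma2), IsPolyTropCone2 M →
      ∃ K : Set (Fin d → K2), (∀ x ∈ K, ∀ i, nnegK (x i)) ∧ IsPolyConeK K ∧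
        val2vec '' K = M) := by
  refine ⟨?_, ?_, ?_, ?_⟩
  -- Part 1
  · rintro K hKn ⟨⟨x0, hx0⟩, hKc⟩
    refine ⟨⟨val2vec x0, ⟨x0, hx0, rfl⟩⟩, ?_⟩
    rintro p ⟨P, hP, rfl⟩ q ⟨Q, hQ, rfl⟩ l m
    obtain ⟨hLn, hLv⟩ := nneg_lift l
    obtain ⟨hMn, hMv⟩ := nneg_lift m
    refine ⟨lift2 l • P + lift2 m • Q, hKc P hP Q hQ _ _ hLn hMn, ?_⟩
    funext i
    have h1 := nneg_mul hLn (hKn P hP i)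
    have h2 := nneg_mul hMn (hKn Q hQ i)
    have h3 := nneg_add h1.1 h2.1
    show val2K ((lift2 l • P + lift2 m • Q) i) = min (l + val2K (P i)) (m + val2K (Q i))
    simp only [Pi.add_apply, Pi.smul_apply, smul_eq_mul]
    rw [h3.2, h1.2, h2.2, hLv, hMv]
  -- Part 2
  · rintro M ⟨⟨m0, hm0⟩, hMc⟩
    refine ⟨{x | (∀ i, nnegK (x i)) ∧ val2vec x ∈ M}, fun x hx => hx.1, ⟨?_, ?_⟩, ?_⟩
    · refine ⟨fun i => lift2 (m0 i), fun i => (nneg_lift (m0 i)).1, ?_⟩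
      have : val2vec (fun i => lift2 (m0 i)) = m0 := funext fun i => (nneg_lift (m0 i)).2
      rw [this]; exact hm0
    · rintro p ⟨hpn, hpM⟩ q ⟨hqn, hqM⟩ l m hl hm
      have hco : ∀ i, nnegK ((l • p + m • q) i) ∧
          val2K ((l • p + m • q) i) = min (val2K l + val2K (p i)) (val2K m + val2K (q i)) := by
        intro i
        have h1 := nneg_mul hl (hpn i)
        have h2 := nneg_mul hm (hqn i)
        have h3 := nneg_add h1.1 h2.1
        simp only [Pi.add_apply, Pi.smul_apply, smul_eq_mul] at h3 ⊢
        exact ⟨h3.1, by rw [h3.2, h1.2, h2.2]⟩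
      refine ⟨fun i => (hco i).1, ?_⟩
      have : val2vec (l • p + m • q) = tropComb2 (val2K l) (val2K m) (val2vec p) (val2vec q) :=
        funext fun i => (hco i).2
      rw [this]; exact hMc _ hpM _ hqM _ _
    · apply Set.eq_of_subset_of_subset
      · rintro y ⟨x, hx, rfl⟩; exact hx.2
      · intro y hy
        refine ⟨fun i => lift2 (y i), ⟨fun i => (nneg_lift (y i)).1, ?_⟩, ?_⟩
        · have : val2vec (fun i => lift2 (y i)) = y := funext fun i => (nneg_lift (y i)).2
          rw [this]; exact hy
        · exact funext fun i => (nneg_lift (y i)).2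
  -- Part 3
  · rintro K hKn ⟨n, v, rfl⟩
    have hvK : ∀ j, v j ∈
        {x | ∃ l : Fin n → K2, (∀ j, nnegK (l j)) ∧ x = ∑ j', l j' • v j'} := by
      intro j
      refine ⟨fun j' => if j' = j then 1 else 0, fun j' => ?_, ?_⟩
      · by_cases h : j' = j
        · simpa [h] using nnegK_one
        · simp only [h, if_false]; exact Or.inl rfl
      · rw [Finset.sum_eq_single_of_mem j (Finset.mem_univ j)
          (fun b _ hb => by show (if b = j then (1:K2) else 0) • v b = 0; rw [if_neg hb]; exact zero_smul K2 (v b))]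
        simp
    have hvn : ∀ j i, nnegK (v j i) := fun j i => hKn _ (hvK j) i
    refine ⟨n, fun j => val2vec (v j), ?_⟩
    apply Set.eq_of_subset_of_subset
    · rintro y ⟨x, ⟨l, hl, rfl⟩, rfl⟩
      exact ⟨fun j => val2K (l j), funext fun i => (key_sum v hvn l hl i).2⟩
    · rintro y ⟨lam, rfl⟩
      refine ⟨∑ j, (fun j => lift2 (lam j)) j • v j,
        ⟨fun j => lift2 (lam j), fun j => (nneg_lift (lam j)).1, rfl⟩, ?_⟩
      funext i
      rw [show val2vec (∑ j, (fun j => lift2 (lam j)) j • v j) i = _ from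
        (key_sum v hvn (fun j => lift2 (lam j)) (fun j => (nneg_lift (lam j)).1) i).2]
      exact Finset.inf_congr rfl fun j _ => by rw [(nneg_lift (lam j)).2]; rfl
  -- Part 4
  · rintro M ⟨n, w, rfl⟩
    set v : Fin n → Fin d → K2 := fun j i => lift2 (w j i) with hv
    have hvn : ∀ j i, nnegK (v j i) := fun j i => (nneg_lift _).1
    have hvv : ∀ j i, val2K (v j i) = w j i := fun j i => (nneg_lift _).2
    refine ⟨{x | ∃ l : Fin n → K2, (∀ j, nnegK (l j)) ∧ x = ∑ j, l j • v j},
      ?_, ⟨n, v, rfl⟩, ?_⟩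
    · rintro x ⟨l, hl, rfl⟩ i
      exact (key_sum v hvn l hl i).1
    · apply Set.eq_of_subset_of_subset
      · rintro y ⟨x, ⟨l, hl, rfl⟩, rfl⟩
        refine ⟨fun j => val2K (l j), funext fun i => ?_⟩
        rw [show val2vec (∑ j, l j • v j) i = _ from (key_sum v hvn l hl i).2]
        exact Finset.inf_congr rfl fun j _ => by rw [hvv j i]
      · rintro y ⟨lam, rfl⟩
        refine ⟨∑ j, (fun j => lift2 (lam j)) j • v j,
          ⟨fun j => lift2 (lam j), fun j => (nneg_lift (lam j)).1, rfl⟩, ?_⟩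
        funext i
        rw [show val2vec (∑ j, (fun j => lift2 (lam j)) j • v j) i = _ from
          (key_sum v hvn (fun j => lift2 (lam j)) (fun j => (nneg_lift (lam j)).1) i).2]
        exact Finset.inf_congr rfl fun j _ => by
          rw [(nneg_lift (lam j)).2, hvv j i]
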